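/- Let T > 0 and let v : ℝ → E be differentiable on [0,T] with ‖v t‖ = 1 for all t ∈ [0,T]. If the function t ↦ √(‖v'(t)‖² − |⟨v t, v'(t)⟩|²) is integrable on [0,T], then Real.arccos ‖⟨v 0, v T⟩‖ ≤ ∫₀ᵀ √(‖v'(t)‖² − |⟨v t, v'(t)⟩|²) dt. -/

import Mathlib

open Set MeasureTheory Filter

private lemma fs_aux_bound (δ G G' S : ℝ) (hδ : 0 < δ) (hδ1 : δ < 1)
    (hG0 : 0 ≤ G) (hG1 : G ≤ 1) (hS : 0 ≤ S)
    (hG' : |G'| ≤ 2 * Real.sqrt G * Real.sqrt (1 - G) * S) :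
    |(-(1 / Real.sqrt (1 - ((1-δ) * Real.sqrt (G+δ))^2)) * ((1-δ) * (G' / (2*Real.sqrt (G+δ)))))| ≤ S := by
  have hA : 0 < Real.sqrt (G+δ) := Real.sqrt_pos.2 (by linarith)
  have hAsq : Real.sqrt (G+δ)^2 = G+δ := Real.sq_sqrt (by linarith)
  have harg : ((1-δ) * Real.sqrt (G+δ))^2 = (1-δ)^2*(G+δ) := by rw [mul_pow, hAsq]
  have e2 : (1-δ)^2*(1+δ) < 1 := by nlinarith [mul_nonneg (sq_nonneg δ) hδ.le]
  have hlt : (1-δ)^2*(G+δ) < 1 := by nlinarith [sq_nonneg (1-δ)]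
  have hB : 0 < Real.sqrt (1 - ((1-δ)*Real.sqrt (G+δ))^2) := Real.sqrt_pos.2 (by rw [harg]; linarith)
  set A := Real.sqrt (G+δ) with hAdef
  set B := Real.sqrt (1 - ((1-δ)*A)^2) with hBdef
  have hBsq : B^2 = 1 - (1-δ)^2*(G+δ) := by rw [hBdef, Real.sq_sqrt (by rw [harg]; linarith), harg]
  have h1 : Real.sqrt G ≤ A := Real.sqrt_le_sqrt (by linarith)
  have h2 : (1-δ) * Real.sqrt (1-G) ≤ B := by
    have hx : (1-δ)*Real.sqrt (1-G) = Real.sqrt ((1-δ)^2*(1-G)) := by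
      rw [Real.sqrt_mul (sq_nonneg _), Real.sqrt_sq (by linarith : (0:ℝ) ≤ 1-δ)]
    rw [hx, hBdef, harg]
    exact Real.sqrt_le_sqrt (by nlinarith)
  have hnum : (1-δ) * |G'| ≤ 2 * (A*B) * S := by
    calc (1-δ)*|G'| ≤ (1-δ)*(2*Real.sqrt G*Real.sqrt (1-G)*S) :=
          mul_le_mul_of_nonneg_left hG' (by linarith)
    _ = 2 * (Real.sqrt G * ((1-δ)*Real.sqrt (1-G))) * S := by ring
    _ ≤ 2 * (A * B) * S := by
        apply mul_le_mul_of_nonneg_right _ hS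
        apply mul_le_mul_of_nonneg_left _ (by norm_num)
        exact mul_le_mul h1 h2 (mul_nonneg (by linarith) (Real.sqrt_nonneg _)) hA.le
  have heq : -(1/B) * ((1-δ) * (G'/(2*A))) = -((1-δ)*G')/(2*(A*B)) := by
    rw [eq_div_iff (by positivity : (2*(A*B)) ≠ 0)]
    field_simp
  rw [heq, abs_div, abs_neg, abs_mul, abs_of_pos (by linarith : (0:ℝ) < 1-δ),
    abs_of_pos (by positivity : (0:ℝ) < 2*(A*B)), div_le_iff₀ (by positivity)]
  nlinarith

private lemma fs_pointwise {E : Type*} [NormedAddCommGroup E] [InnerProductSpace ℂ E]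
    (a b d : E) (ha : ‖a‖ = 1) (hb : ‖b‖ = 1)
    (hre : ((inner ℂ a d : ℂ)).re = 0) :
    |2 * ((starRingEnd ℂ) (inner ℂ a b : ℂ) * (inner ℂ d b : ℂ)).re| ≤
      2 * Real.sqrt (‖(inner ℂ a b : ℂ)‖^2) * Real.sqrt (1 - ‖(inner ℂ a b : ℂ)‖^2) *
        Real.sqrt (‖d‖^2 - ‖(inner ℂ a d : ℂ)‖^2) := by
  set μ : ℂ := (inner ℂ a d : ℂ) with hμ
  set c : ℂ := (inner ℂ a b : ℂ) with hc
  set w : E := d - μ • a with hwdef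
  set p : E := b - c • a with hpdef
  have haa : (inner ℂ a a : ℂ) = 1 := by
    rw [inner_self_eq_norm_sq_to_K, ha]; norm_num
  have hwa : (inner ℂ a w : ℂ) = 0 := by
    simp [hwdef, inner_sub_right, inner_smul_right, haa, ha, hμ]
  have haw : (inner ℂ w a : ℂ) = 0 := by
    rw [← inner_conj_symm, hwa]; simp
  have hw : ‖w‖^2 = ‖d‖^2 - ‖μ‖^2 := by
    have h1 : ‖w‖^2 = ‖d‖^2 - 2 * RCLike.re (inner ℂ d (μ • a) : ℂ) + ‖μ • a‖^2 :=
      norm_sub_sq (𝕜 := ℂ) d (μ • a)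
    have h2 : (inner ℂ d (μ • a) : ℂ) = μ * (starRingEnd ℂ) μ := by
      rw [inner_smul_right]
      congr 1
      rw [hμ, ← inner_conj_symm]
    have h3 : RCLike.re (μ * (starRingEnd ℂ) μ) = ‖μ‖^2 := by
      simp only [Complex.mul_conj, RCLike.re_to_complex, Complex.ofReal_re,
        Complex.normSq_eq_norm_sq]
    rw [h1, h2, h3, norm_smul, ha]
    simp [mul_pow]; ring
  have hp : ‖p‖^2 = 1 - ‖c‖^2 := by
    have h1 : ‖p‖^2 = ‖b‖^2 - 2 * RCLike.re (inner ℂ b (c • a) : ℂ) + ‖c • a‖^2 :=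
      norm_sub_sq (𝕜 := ℂ) b (c • a)
    have h2 : (inner ℂ b (c • a) : ℂ) = c * (starRingEnd ℂ) c := by
      rw [inner_smul_right]
      congr 1
      rw [hc, ← inner_conj_symm]
    have h3 : RCLike.re (c * (starRingEnd ℂ) c) = ‖c‖^2 := by
      simp only [Complex.mul_conj, RCLike.re_to_complex, Complex.ofReal_re,
        Complex.normSq_eq_norm_sq]
    rw [h1, h2, h3, norm_smul, hb, ha]
    simp [mul_pow]; ring
  have hdb : (inner ℂ d b : ℂ) = (starRingEnd ℂ) μ * c + (inner ℂ w b : ℂ) := by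
    have : d = w + μ • a := by rw [hwdef]; abel
    rw [this, inner_add_left, inner_smul_left]; ring
  have hwb : (inner ℂ w b : ℂ) = (inner ℂ w p : ℂ) := by
    simp [hpdef, inner_sub_right, inner_smul_right, haw]
  have hcc : (starRingEnd ℂ) c * c = ((‖c‖^2 : ℝ) : ℂ) := by
    rw [Complex.conj_mul']
    push_cast
    ring
  have hkill : ((starRingEnd ℂ) c * ((starRingEnd ℂ) μ * c)).re = 0 := by
    have : (starRingEnd ℂ) c * ((starRingEnd ℂ) μ * c) = (starRingEnd ℂ) μ * ((‖c‖^2 : ℝ) : ℂ) := by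
      rw [← hcc]; ring
    rw [this]
    simp only [Complex.mul_re, Complex.conj_re, Complex.conj_im, Complex.ofReal_re,
      Complex.ofReal_im, hre]
    ring
  have hmain : (2 * ((starRingEnd ℂ) c * (inner ℂ d b : ℂ)).re)
      = 2 * ((starRingEnd ℂ) c * (inner ℂ w p : ℂ)).re := by
    rw [hdb, hwb, mul_add, Complex.add_re, hkill]
    ring
  rw [hmain]
  have hbound : |2 * ((starRingEnd ℂ) c * (inner ℂ w p : ℂ)).re|
      ≤ 2 * (‖c‖ * (‖w‖ * ‖p‖)) := by
    rw [abs_mul, abs_of_pos (by norm_num : (0:ℝ) < 2)]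
    have h1 : |((starRingEnd ℂ) c * (inner ℂ w p : ℂ)).re| ≤ ‖(starRingEnd ℂ) c * (inner ℂ w p : ℂ)‖ :=
      Complex.abs_re_le_norm _
    have h2 : ‖(starRingEnd ℂ) c * (inner ℂ w p : ℂ)‖ = ‖c‖ * ‖(inner ℂ w p : ℂ)‖ := by
      rw [norm_mul, RCLike.norm_conj]
    have h3 : ‖(inner ℂ w p : ℂ)‖ ≤ ‖w‖ * ‖p‖ := norm_inner_le_norm w p
    have h4 : ‖c‖ * ‖(inner ℂ w p : ℂ)‖ ≤ ‖c‖ * (‖w‖ * ‖p‖) := by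
      nlinarith [norm_nonneg c]
    have := (h1.trans (le_of_eq h2)).trans h4
    linarith
  refine hbound.trans (le_of_eq ?_)
  rw [Real.sqrt_sq (norm_nonneg c), ← hp, ← hw, Real.sqrt_sq (norm_nonneg p),
    Real.sqrt_sq (norm_nonneg w)]
  ring

/-- Geometric quantum speed limit for arbitrary time-continuous normalized dynamics:
the Fubini–Study length of a normalized curve dominates the angle between its endpoints. -/
theorem fubini_study_speed_limit
    {E : Type*} [NormedAddCommGroup E] [InnerProductSpace ℂ E] [FiniteDimensional ℂ E]
    (T : ℝ) (hT : 0 < T) (v v' : ℝ → E)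
    (hnorm : ∀ t ∈ Set.Icc (0 : ℝ) T, ‖v t‖ = 1)
    (hderiv : ∀ t ∈ Set.Icc (0 : ℝ) T, HasDerivAt v (v' t) t)
    (hint : IntervalIntegrable
      (fun t => Real.sqrt (‖v' t‖ ^ 2 - ‖(inner ℂ (v t) (v' t) : ℂ)‖ ^ 2))
      MeasureTheory.volume 0 T) :
    Real.arccos ‖(inner ℂ (v 0) (v T) : ℂ)‖ ≤
      ∫ t in (0 : ℝ)..T, Real.sqrt (‖v' t‖ ^ 2 - ‖(inner ℂ (v t) (v' t) : ℂ)‖ ^ 2) := by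
  have hT0 : (0:ℝ) ∈ Set.Icc (0:ℝ) T := ⟨le_rfl, hT.le⟩
  have hTT : T ∈ Set.Icc (0:ℝ) T := ⟨hT.le, le_rfl⟩
  set s : ℝ → ℝ := fun t => Real.sqrt (‖v' t‖ ^ 2 - ‖(inner ℂ (v t) (v' t) : ℂ)‖ ^ 2) with hsdef
  set c : ℝ → ℂ := fun t => (inner ℂ (v t) (v T) : ℂ) with hcdef
  set g : ℝ → ℝ := fun t => ‖c t‖^2 with hgdef
  set g' : ℝ → ℝ := fun t => 2 * ((starRingEnd ℂ) (c t) * (inner ℂ (v' t) (v T) : ℂ)).re with hg'def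
  -- derivative of c
  have hc : ∀ t ∈ Icc (0:ℝ) T, HasDerivAt c ((inner ℂ (v' t) (v T) : ℂ)) t := by
    intro t ht
    simpa [hcdef] using HasDerivAt.inner ℂ (hderiv t ht) (hasDerivAt_const t (v T))
  -- derivative of g
  have hg : ∀ t ∈ Icc (0:ℝ) T, HasDerivAt g (g' t) t := by
    intro t ht
    have h1 : HasDerivAt (fun t => (inner ℂ (c t) (c t) : ℂ))
        ((inner ℂ (c t) ((inner ℂ (v' t) (v T) : ℂ)) : ℂ) + (inner ℂ ((inner ℂ (v' t) (v T) : ℂ)) (c t) : ℂ)) t :=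
      HasDerivAt.inner ℂ (hc t ht) (hc t ht)
    have h2 := Complex.reCLM.hasFDerivAt.comp_hasDerivAt t h1
    have h3 : (fun t => Complex.reCLM ((inner ℂ (c t) (c t) : ℂ))) = g := by
      funext x
      simpa [hgdef] using inner_self_eq_norm_sq (𝕜 := ℂ) (c x)
    have h4 : Complex.reCLM ((inner ℂ (c t) ((inner ℂ (v' t) (v T) : ℂ)) : ℂ)
        + (inner ℂ ((inner ℂ (v' t) (v T) : ℂ)) (c t) : ℂ)) = g' t := by
      simp only [Complex.reCLM_apply, Complex.add_re, RCLike.inner_apply, hg'def,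
        Complex.mul_re, Complex.conj_re, Complex.conj_im]
      ring
    rw [← h3, ← h4]; exact h2
  -- Re ⟨v, v'⟩ = 0
  have hre : ∀ t ∈ Icc (0:ℝ) T, ((inner ℂ (v t) (v' t) : ℂ)).re = 0 := by
    intro t ht
    have hN : HasDerivAt (fun t => ‖v t‖^2) (2 * ((inner ℂ (v t) (v' t) : ℂ)).re) t := by
      have h1 : HasDerivAt (fun t => (inner ℂ (v t) (v t) : ℂ))
          ((inner ℂ (v t) (v' t) : ℂ) + (inner ℂ (v' t) (v t) : ℂ)) t :=
        HasDerivAt.inner ℂ (hderiv t ht) (hderiv t ht)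
      have h2 := Complex.reCLM.hasFDerivAt.comp_hasDerivAt t h1
      have h3 : (fun t => Complex.reCLM ((inner ℂ (v t) (v t) : ℂ))) = fun t => ‖v t‖^2 := by
        funext x
        simpa using inner_self_eq_norm_sq (𝕜 := ℂ) (v x)
      have h4 : Complex.reCLM ((inner ℂ (v t) (v' t) : ℂ) + (inner ℂ (v' t) (v t) : ℂ))
          = 2 * ((inner ℂ (v t) (v' t) : ℂ)).re := by
        rw [← inner_conj_symm (v t) (v' t)]
        simp only [Complex.reCLM_apply, Complex.add_re, Complex.conj_re]
        ring
      rw [← h3, ← h4]; exact h2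
    have hud : UniqueDiffWithinAt ℝ (Icc (0:ℝ) T) t := (uniqueDiffOn_Icc hT) t ht
    have hW2 : HasDerivWithinAt (fun t : ℝ => ‖v t‖^2) 0 (Icc 0 T) t :=
      (hasDerivWithinAt_const t _ (1:ℝ)).congr (fun y hy => by rw [hnorm y hy]; norm_num)
        (by rw [hnorm t ht]; norm_num)
    have e1 := (hN.hasDerivWithinAt (s := Icc (0:ℝ) T)).derivWithin hud
    have e2 := hW2.derivWithin hud
    rw [e2] at e1
    linarith
  -- bounds on g
  have hg0 : ∀ t, 0 ≤ g t := fun t => by rw [hgdef]; positivity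
  have hg1 : ∀ t ∈ Icc (0:ℝ) T, g t ≤ 1 := by
    intro t ht
    have h1 := norm_inner_le_norm (𝕜 := ℂ) (v t) (v T)
    rw [hnorm t ht, hnorm T hTT] at h1
    have h2 : ‖c t‖ ≤ 1 := by simpa [hcdef] using h1
    have h3 : g t = ‖c t‖^2 := rfl
    rw [h3]
    nlinarith [norm_nonneg (c t)]
  have hgT : g T = 1 := by
    have hcT : c T = 1 := by
      rw [hcdef]
      simp only [inner_self_eq_norm_sq_to_K, hnorm T hTT]
      norm_num
    rw [hgdef]; simp [hcT]
  -- the pointwise derivative bound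
  have hgb : ∀ t ∈ Icc (0:ℝ) T, |g' t| ≤ 2 * Real.sqrt (g t) * Real.sqrt (1 - g t) * s t := by
    intro t ht
    have h := fs_pointwise (v t) (v T) (v' t) (hnorm t ht) (hnorm T hTT) (hre t ht)
    have hsg : Real.sqrt (g t) = Real.sqrt (‖(inner ℂ (v t) (v T) : ℂ)‖^2) := by rw [hgdef, hcdef]
    rw [hg'def, hsdef, hsg, hgdef, hcdef]
    exact h
  -- integrability on Icc
  have hsint : IntegrableOn s (Icc (0:ℝ) T) volume :=
    (intervalIntegrable_iff_integrableOn_Icc_of_le hT.le).mp hint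
  -- key inequality for each δ ∈ (0,1)
  have key : ∀ δ ∈ Ioo (0:ℝ) 1,
      Real.arccos ((1-δ) * Real.sqrt (g 0 + δ)) ≤
        Real.arccos ((1-δ) * Real.sqrt (1 + δ)) + ∫ t in (0:ℝ)..T, s t := by
    intro δ hδ
    obtain ⟨hδ0, hδ1⟩ := hδ
    set ψ : ℝ → ℝ := fun t => Real.arccos ((1-δ) * Real.sqrt (g t + δ)) with hψdef
    set ψ' : ℝ → ℝ := fun t =>
      -(1 / Real.sqrt (1 - ((1-δ) * Real.sqrt (g t + δ))^2)) *
        ((1-δ) * (g' t / (2 * Real.sqrt (g t + δ)))) with hψ'def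
    have hψd : ∀ t ∈ Icc (0:ℝ) T, HasDerivAt ψ (ψ' t) t := by
      intro t ht
      have hpos : 0 < g t + δ := by have := hg0 t; linarith
      have h0 : HasDerivAt (fun y => Real.sqrt (g y + δ)) (1 / (2 * Real.sqrt (g t + δ)) * g' t) t := by
        simpa [Function.comp_def] using
          (Real.hasDerivAt_sqrt (ne_of_gt hpos)).comp t ((hg t ht).add_const δ)
      have h1 : HasDerivAt (fun y => (1-δ) * Real.sqrt (g y + δ))
          ((1-δ) * (g' t / (2 * Real.sqrt (g t + δ)))) t := by
        have := h0.const_mul (1-δ)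
        exact this.congr_deriv (by ring)
      have hsq : ((1-δ) * Real.sqrt (g t + δ))^2 = (1-δ)^2 * (g t + δ) := by
        rw [mul_pow, Real.sq_sqrt hpos.le]
      have harg_nonneg : 0 ≤ (1-δ) * Real.sqrt (g t + δ) :=
        mul_nonneg (by linarith) (Real.sqrt_nonneg _)
      have harg_lt : (1-δ) * Real.sqrt (g t + δ) < 1 := by
        nlinarith [hg1 t ht, hg0 t, mul_nonneg (sq_nonneg δ) hδ0.le]
      have h2 := (Real.hasDerivAt_arccos (by linarith) (ne_of_lt harg_lt)).comp t h1
      simpa [hψdef, hψ'def, Function.comp_def] using h2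
    have hcont : ContinuousOn (fun t => -ψ t) (Icc (0:ℝ) T) :=
      fun t ht => ((hψd t ht).continuousAt.continuousWithinAt).neg
    have hd : ∀ t ∈ Ioo (0:ℝ) T, HasDerivWithinAt (fun t => -ψ t) (-ψ' t) (Ioi t) t :=
      fun t ht => ((hψd t (Ioo_subset_Icc_self ht)).neg).hasDerivWithinAt
    have hle : ∀ t ∈ Ioo (0:ℝ) T, -ψ' t ≤ s t := by
      intro t ht
      have ht' := Ioo_subset_Icc_self ht
      have hS : 0 ≤ s t := Real.sqrt_nonneg _
      have hb := fs_aux_bound δ (g t) (g' t) (s t) hδ0 hδ1 (hg0 t) (hg1 t ht') hS (hgb t ht')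
      have : |ψ' t| ≤ s t := by rw [hψ'def]; exact hb
      calc -ψ' t ≤ |ψ' t| := neg_le_abs _
      _ ≤ s t := this
    have hFTC := intervalIntegral.sub_le_integral_of_hasDeriv_right_of_le hT.le hcont hd hsint hle
    have hψT : ψ T = Real.arccos ((1-δ) * Real.sqrt (1 + δ)) := by
      rw [hψdef]; simp only [hgT]
    have hψ0 : ψ 0 = Real.arccos ((1-δ) * Real.sqrt (g 0 + δ)) := by rw [hψdef]
    rw [hψT, hψ0] at hFTC
    linarith
  -- pass to the limit δ → 0⁺
  have hgoal : Real.arccos ‖(inner ℂ (v 0) (v T) : ℂ)‖ = Real.arccos (Real.sqrt (g 0)) := by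
    rw [hgdef, hcdef]
    rw [Real.sqrt_sq (norm_nonneg _)]
  rw [hgoal]
  have hF : Continuous (fun δ : ℝ =>
      Real.arccos ((1-δ) * Real.sqrt (g 0 + δ)) - Real.arccos ((1-δ) * Real.sqrt (1 + δ))) := by
    apply Continuous.sub
    · exact Real.continuous_arccos.comp (by fun_prop)
    · exact Real.continuous_arccos.comp (by fun_prop)
  have hlim : Tendsto (fun δ : ℝ =>
      Real.arccos ((1-δ) * Real.sqrt (g 0 + δ)) - Real.arccos ((1-δ) * Real.sqrt (1 + δ)))
      (nhdsWithin 0 (Ioi 0)) (nhds (Real.arccos (Real.sqrt (g 0)))) := by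
    have h0 := hF.tendsto 0
    simp only [sub_zero, one_mul, add_zero, Real.sqrt_one, Real.arccos_one] at h0
    exact h0.mono_left nhdsWithin_le_nhds
  have hev : ∀ᶠ δ in nhdsWithin (0:ℝ) (Ioi 0),
      Real.arccos ((1-δ) * Real.sqrt (g 0 + δ)) - Real.arccos ((1-δ) * Real.sqrt (1 + δ))
        ≤ ∫ t in (0:ℝ)..T, s t := by
    filter_upwards [Ioo_mem_nhdsGT_of_mem (by norm_num : (0:ℝ) ∈ Ico (0:ℝ) 1)] with δ hδ
    linarith [key δ hδ]
  exact le_of_tendsto hlim hev
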